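/- Let d ≥ 3, let the graph W be connected, let β > 0, and let φ(t) = e^{βt}/β. If X ∈ ℝ^{d×n} with unit-norm columns is critical for f and has negative-semidefinite Hessian, then all columns of X are equal: x_1 = ⋯ = x_n. -/

import Mathlib

open Matrix

noncomputable section

/-- Frobenius inner product `⟨A,B⟩ = ∑ᵢⱼ Aᵢⱼ Bᵢⱼ`. -/
def frob {ι κ : Type*} [Fintype ι] [Fintype κ] (A B : Matrix ι κ ℝ) : ℝ :=
  ∑ i, ∑ j, A i j * B i j

/-- `ddiag` zeroes out all off-diagonal entries of a square matrix. -/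
def ddiag {ι : Type*} [Fintype ι] [DecidableEq ι] (M : Matrix ι ι ℝ) : Matrix ι ι ℝ :=
  Matrix.diagonal fun i => M i i

/-- Graph Laplacian `L(M) = diag(M 1) − M`. -/
def lap {ι : Type*} [Fintype ι] [DecidableEq ι] (M : Matrix ι ι ℝ) : Matrix ι ι ℝ :=
  Matrix.diagonal (fun i => ∑ j, M i j) - M

/-- `X` has unit-norm columns. -/
def unitCols {d : ℕ} {ι : Type*} [Fintype ι] (X : Matrix (Fin d) ι ℝ) : Prop :=
  ∀ j, ∑ i, X i j ^ 2 = 1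

/-- `A = W ⊙ φ'(XᵀX)` (`d1` playing the role of `φ'`). -/
def Amat {d : ℕ} {ι : Type*} [Fintype ι] (W : Matrix ι ι ℝ) (X : Matrix (Fin d) ι ℝ)
    (d1 : ℝ → ℝ) : Matrix ι ι ℝ :=
  Matrix.hadamard W ((Xᵀ * X).map d1)

/-- `S = ddiag(XᵀXA) − A`. -/
def Smat {d : ℕ} {ι : Type*} [Fintype ι] [DecidableEq ι] (W : Matrix ι ι ℝ)
    (X : Matrix (Fin d) ι ℝ) (d1 : ℝ → ℝ) : Matrix ι ι ℝ :=
  ddiag ((Xᵀ * X) * Amat W X d1) - Amat W X d1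

/-- First-order criticality: `X S = 0`, i.e. `X·ddiag(XᵀXA) = XA`
(vanishing Riemannian gradient on the product of spheres). -/
def IsCritical {d : ℕ} {ι : Type*} [Fintype ι] [DecidableEq ι] (W : Matrix ι ι ℝ)
    (X : Matrix (Fin d) ι ℝ) (d1 : ℝ → ℝ) : Prop :=
  X * Smat W X d1 = 0

/-- The Riemannian Hessian quadratic form of `f` at `X` is negative semidefinite:
`−⟨ẊᵀẊ, S⟩ + (1/2)⟨(XᵀẊ + ẊᵀX)^{⊙2}, W ⊙ φ''(XᵀX)⟩ ≤ 0` for all tangent `Ẋ`. -/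
def HessNegSemidef {d : ℕ} {ι : Type*} [Fintype ι] [DecidableEq ι] (W : Matrix ι ι ℝ)
    (X : Matrix (Fin d) ι ℝ) (d1 d2 : ℝ → ℝ) : Prop :=
  ∀ V : Matrix (Fin d) ι ℝ, (∀ j, (Xᵀ * V) j j = 0) →
    -(frob (Vᵀ * V) (Smat W X d1))
      + (1 / 2) * frob ((Xᵀ * V + Vᵀ * X).map fun t => t ^ 2)
          (Matrix.hadamard W ((Xᵀ * X).map d2)) ≤ 0

/-- The graph with an edge `{i,j}` whenever `w_ij > 0` is connected. -/
def ConnectedW {ι : Type*} (W : Matrix ι ι ℝ) : Prop :=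
  (SimpleGraph.fromRel fun i j => 0 < W i j).Connected

/-- `f(Y) = (1/2)⟨W, φ(YᵀY)⟩`. -/
def fval {d : ℕ} {ι : Type*} [Fintype ι] (W : Matrix ι ι ℝ) (φ : ℝ → ℝ)
    (Y : Matrix (Fin d) ι ℝ) : ℝ :=
  (1 / 2) * frob W ((Yᵀ * Y).map φ)

/-- `h(t) = tφ'(t) − (1−t²)φ''(t)`. -/
def hfun (d1 d2 : ℝ → ℝ) (t : ℝ) : ℝ := t * d1 t - (1 - t ^ 2) * d2 t

/-- The matrix `M` with `m_ij = w_ij · h(x_iᵀx_j)`. -/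
def Mmat {d : ℕ} {ι : Type*} [Fintype ι] (W : Matrix ι ι ℝ) (X : Matrix (Fin d) ι ℝ)
    (d1 d2 : ℝ → ℝ) : Matrix ι ι ℝ :=
  Matrix.of fun i j => W i j * hfun d1 d2 ((Xᵀ * X) i j)

/-- The kernel of `L` is exactly `span(1)`. -/
def KernelIsConst {ι : Type*} [Fintype ι] [DecidableEq ι] (L : Matrix ι ι ℝ) : Prop :=
  ∀ α : ι → ℝ, L.mulVec α = 0 ↔ ∃ c : ℝ, ∀ k, α k = c

/-- The regular `n`-gon configuration on the unit circle. -/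
def ngon (n : ℕ) : Matrix (Fin 2) (Fin n) ℝ :=
  Matrix.of fun a j =>
    if a = 0 then Real.cos (2 * Real.pi * (j : ℝ) / (n : ℝ))
    else Real.sin (2 * Real.pi * (j : ℝ) / (n : ℝ))

/-- The log-sum-exp smoothing `φ_{ε,τ}(t) = ε·log(1 + e^{(t−τ)/ε})` of the ReLU. -/
def philse (ε τ : ℝ) : ℝ → ℝ := fun t => ε * Real.log (1 + Real.exp ((t - τ) / ε))

section SyncAux

variable {d n : ℕ}

/-- the `k`-th coordinate tangent perturbation: column `j` is `e_k - (x_j)_k x_j`. -/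
private def Vk (X : Matrix (Fin d) (Fin n) ℝ) (k : Fin d) : Matrix (Fin d) (Fin n) ℝ :=
  Matrix.of fun a j => (if a = k then 1 else 0) - X k j * X a j

variable (X : Matrix (Fin d) (Fin n) ℝ)

private lemma hP (i j : Fin n) : (Xᵀ * X) i j = ∑ a, X a i * X a j := by
  simp [Matrix.mul_apply]

private lemma hPd (hX : unitCols X) (j : Fin n) : ∑ a, X a j * X a j = 1 := by
  simpa [pow_two] using hX j

private lemma hPdd (hX : unitCols X) (j : Fin n) : (Xᵀ * X) j j = 1 := by
  rw [hP]; exact hPd X hX j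

private lemma hPs (i j : Fin n) : (Xᵀ * X) j i = (Xᵀ * X) i j := by
  rw [hP, hP]; exact Finset.sum_congr rfl fun a _ => mul_comm _ _

private lemma tangentVk (hX : unitCols X) (k : Fin d) (j : Fin n) :
    (Xᵀ * Vk X k) j j = 0 := by
  have h1 : ∑ a, X a j * (X k j * X a j) = X k j * ∑ a, X a j * X a j := by
    rw [Finset.mul_sum]; exact Finset.sum_congr rfl fun a _ => by ring
  simp [Matrix.mul_apply, Vk, mul_sub, Finset.sum_sub_distrib, mul_ite, h1, hPd X hX]

private lemma L1 (hX : unitCols X) (i j : Fin n) :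
    ∑ k, ∑ a, Vk X k a i * Vk X k a j = (d : ℝ) - 2 + ((Xᵀ * X) i j) ^ 2 := by
  rw [hP]
  have expand : ∀ k a : Fin d, Vk X k a i * Vk X k a j =
      ((if a = k then (1:ℝ) else 0) - (if a = k then (1:ℝ) else 0) * (X k j * X a j))
      - (if a = k then (1:ℝ) else 0) * (X k i * X a i)
      + (X k i * X k j) * (X a i * X a j) := by
    intro k a
    by_cases h : a = k <;> simp [Vk, h] <;> ring
  rw [Finset.sum_comm]
  calc ∑ a, ∑ k, Vk X k a i * Vk X k a j
      = ∑ a : Fin d, ((1 : ℝ) - X a j * X a j - X a i * X a i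
          + (X a i * X a j) * ∑ k, X k i * X k j) := by
        refine Finset.sum_congr rfl fun a _ => ?_
        simp only [expand]
        simp only [ite_mul, one_mul, zero_mul, Finset.sum_add_distrib,
          Finset.sum_sub_distrib, Finset.sum_ite_eq, Finset.mem_univ, if_true]
        rw [← Finset.sum_mul]
        ring
    _ = (d : ℝ) - 2 + (∑ a, X a i * X a j) ^ 2 := by
        rw [Finset.sum_add_distrib, Finset.sum_sub_distrib, Finset.sum_sub_distrib,
          ← Finset.sum_mul, hPd X hX, hPd X hX]
        simp [Finset.card_univ]
        ring

private lemma L2 (k : Fin d) (i j : Fin n) :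
    (Xᵀ * Vk X k + (Vk X k)ᵀ * X) i j
      = (X k i + X k j) * (1 - (Xᵀ * X) i j) := by
  rw [hP]
  have h1 : ∑ a, X a i * (X k j * X a j) = X k j * ∑ a, X a i * X a j := by
    rw [Finset.mul_sum]; exact Finset.sum_congr rfl fun a _ => by ring
  have h2 : ∑ a, (X k i * X a i) * X a j = X k i * ∑ a, X a i * X a j := by
    rw [Finset.mul_sum]; exact Finset.sum_congr rfl fun a _ => by ring
  simp [Matrix.add_apply, Matrix.mul_apply, Vk, mul_sub, sub_mul,
    Finset.sum_sub_distrib, mul_ite, ite_mul, h1, h2]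
  ring

private lemma L3 (hX : unitCols X) (i j : Fin n) (c : ℝ) :
    ∑ k, ((X k i + X k j) * c) ^ 2
      = (2 + 2 * (Xᵀ * X) i j) * c ^ 2 := by
  rw [hP]
  have e : ∀ k : Fin d, ((X k i + X k j) * c) ^ 2
      = (X k i * X k i + X k j * X k j + 2 * (X k i * X k j)) * c ^ 2 := fun k => by ring
  simp only [e]
  rw [← Finset.sum_mul]
  congr 1
  rw [Finset.sum_add_distrib, Finset.sum_add_distrib, hPd X hX i, hPd X hX j,
    ← Finset.mul_sum]
  ring

private lemma L4 (W : Matrix (Fin n) (Fin n) ℝ) (hWsymm : W.IsSymm) (hX : unitCols X)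
    (d1 : ℝ → ℝ) :
    ∑ i, ∑ j, ((d : ℝ) - 2 + ((Xᵀ * X) i j) ^ 2) * Smat W X d1 i j
      = ∑ i, ∑ j, (W i j * d1 ((Xᵀ * X) i j))
          * (((Xᵀ * X) i j - 1) * ((d : ℝ) - 2 - (Xᵀ * X) i j)) := by
  have hWs : ∀ i j, W j i = W i j := fun i j => (hWsymm.apply j i).symm
  have hA : ∀ i j, Amat W X d1 i j = W i j * d1 ((Xᵀ * X) i j) := fun i j => by
    simp [Amat, Matrix.hadamard_apply]
  have hAs : ∀ i j, Amat W X d1 j i = Amat W X d1 i j := fun i j => by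
    rw [hA, hA, hPs, hWs]
  have hS : ∀ i j, Smat W X d1 i j
      = (if i = j then ∑ k, (Xᵀ * X) i k * Amat W X d1 k i else 0) - Amat W X d1 i j := by
    intro i j
    simp [Smat, ddiag, Matrix.diagonal_apply, Matrix.sub_apply, Matrix.mul_apply, Amat]
  have hdiag : ∀ i, ((d : ℝ) - 2 + ((Xᵀ * X) i i) ^ 2)
      * ∑ k, (Xᵀ * X) i k * Amat W X d1 k i
      = ∑ k, ((d : ℝ) - 1) * ((Xᵀ * X) i k * Amat W X d1 i k) := by
    intro i
    rw [hPdd X hX, Finset.mul_sum]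
    refine Finset.sum_congr rfl fun k _ => ?_
    rw [hAs]
    ring
  have lhs_eq : ∀ i, (∑ j, ((d : ℝ) - 2 + ((Xᵀ * X) i j) ^ 2) * Smat W X d1 i j)
      = ∑ k, ((d : ℝ) - 1) * ((Xᵀ * X) i k * Amat W X d1 i k)
        - ∑ j, ((d : ℝ) - 2 + ((Xᵀ * X) i j) ^ 2) * Amat W X d1 i j := by
    intro i
    simp only [hS, mul_sub, Finset.sum_sub_distrib, mul_ite, mul_zero, Finset.sum_ite_eq,
      Finset.mem_univ, if_true, hdiag]
  simp only [lhs_eq, ← Finset.sum_sub_distrib]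
  refine Finset.sum_congr rfl fun i _ => Finset.sum_congr rfl fun j _ => ?_
  rw [hA]
  ring

end SyncAux

/-- Corollary 1 for spheres, exponential `φ(t) = e^{βt}/β`, `β > 0`. -/
theorem synchronization_on_spheres_exponential
    {d n : ℕ} (hd : 3 ≤ d) (hn : 1 ≤ n)
    (W : Matrix (Fin n) (Fin n) ℝ) (hWsymm : W.IsSymm) (hWnonneg : ∀ i j, 0 ≤ W i j)
    (hconn : ConnectedW W)
    (β : ℝ) (hβ : 0 < β)
    (X : Matrix (Fin d) (Fin n) ℝ) (hX : unitCols X)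
    (hcrit : IsCritical W X (deriv fun t => Real.exp (β * t) / β))
    (hhess : HessNegSemidef W X (deriv fun t => Real.exp (β * t) / β)
      (deriv (deriv fun t => Real.exp (β * t) / β))) :
    ∀ j j' : Fin n, ∀ i, X i j = X i j' := by
  -- identify the derivatives
  have hD1 : (deriv fun t => Real.exp (β * t) / β) = fun t => Real.exp (β * t) := by
    funext t
    have h1 : HasDerivAt (fun t => Real.exp (β * t)) (Real.exp (β * t) * β) t := by
      have h := (Real.hasDerivAt_exp (β * t)).comp t ((hasDerivAt_id t).const_mul β)
      rw [mul_one] at h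
      exact h
    have h2 := h1.div_const β
    rw [mul_div_assoc, div_self hβ.ne', mul_one] at h2
    exact h2.deriv
  have hD2 : (deriv (deriv fun t => Real.exp (β * t) / β))
      = fun t => Real.exp (β * t) * β := by
    rw [hD1]
    funext t
    have h1 : HasDerivAt (fun t => Real.exp (β * t)) (Real.exp (β * t) * β) t := by
      have h := (Real.hasDerivAt_exp (β * t)).comp t ((hasDerivAt_id t).const_mul β)
      rw [mul_one] at h
      exact h
    exact h1.deriv
  rw [hD2, hD1] at hhess
  set d1 : ℝ → ℝ := fun t => Real.exp (β * t) with hd1def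
  set d2 : ℝ → ℝ := fun t => Real.exp (β * t) * β with hd2def
  -- sum/combination helpers
  have hcomb : ∀ (f g : Fin n → Fin n → ℝ),
      -(∑ i, ∑ j, f i j) + (1/2) * (∑ i, ∑ j, g i j)
        = ∑ i, ∑ j, (-(f i j) + (1/2) * g i j) := by
    intro f g
    simp only [Finset.sum_add_distrib, Finset.sum_neg_distrib, ← Finset.mul_sum]
  have hswap : ∀ (F : Fin d → Fin n → Fin n → ℝ),
      ∑ k, ∑ i, ∑ j, F k i j = ∑ i, ∑ j, ∑ k, F k i j := by
    intro F
    rw [Finset.sum_comm]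
    exact Finset.sum_congr rfl fun i _ => Finset.sum_comm
  -- the key identity: summing the Hessian quadratic form over coordinate tangents
  have hEq : ∑ k, (-(frob ((Vk X k)ᵀ * Vk X k) (Smat W X d1))
        + (1/2) * frob ((Xᵀ * Vk X k + (Vk X k)ᵀ * X).map fun t => t ^ 2)
            (Matrix.hadamard W ((Xᵀ * X).map d2)))
      = ∑ i, ∑ j, W i j * Real.exp (β * (Xᵀ * X) i j)
          * ((1 - (Xᵀ * X) i j) * (((d : ℝ) - 2 - (Xᵀ * X) i j)
              + β * ((1 - (Xᵀ * X) i j) * (1 + (Xᵀ * X) i j)))) := by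
    calc ∑ k, (-(frob ((Vk X k)ᵀ * Vk X k) (Smat W X d1))
        + (1/2) * frob ((Xᵀ * Vk X k + (Vk X k)ᵀ * X).map fun t => t ^ 2)
            (Matrix.hadamard W ((Xᵀ * X).map d2)))
        = ∑ k, ∑ i, ∑ j, (-((∑ a, Vk X k a i * Vk X k a j) * Smat W X d1 i j)
            + (1/2) * ((((X k i + X k j) * (1 - (Xᵀ * X) i j)) ^ 2)
                * (W i j * Real.exp (β * (Xᵀ * X) i j) * β))) := by
          refine Finset.sum_congr rfl fun k _ => ?_
          have e1 : frob ((Vk X k)ᵀ * Vk X k) (Smat W X d1)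
              = ∑ i, ∑ j, (∑ a, Vk X k a i * Vk X k a j) * Smat W X d1 i j := by
            simp [frob, Matrix.mul_apply, Matrix.transpose_apply]
          have e2 : frob ((Xᵀ * Vk X k + (Vk X k)ᵀ * X).map fun t => t ^ 2)
                (Matrix.hadamard W ((Xᵀ * X).map d2))
              = ∑ i, ∑ j, (((X k i + X k j) * (1 - (Xᵀ * X) i j)) ^ 2)
                  * (W i j * Real.exp (β * (Xᵀ * X) i j) * β) := by
            simp only [frob, Matrix.map_apply, Matrix.hadamard_apply, L2, hd2def]
            refine Finset.sum_congr rfl fun i _ => Finset.sum_congr rfl fun j _ => ?_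
            ring
          rw [e1, e2, hcomb]
      _ = ∑ i, ∑ j, (-((((d : ℝ) - 2 + ((Xᵀ * X) i j) ^ 2)) * Smat W X d1 i j)
            + (1/2) * (((2 + 2 * (Xᵀ * X) i j) * (1 - (Xᵀ * X) i j) ^ 2)
                * (W i j * Real.exp (β * (Xᵀ * X) i j) * β))) := by
          rw [hswap]
          refine Finset.sum_congr rfl fun i _ => Finset.sum_congr rfl fun j _ => ?_
          rw [Finset.sum_add_distrib, Finset.sum_neg_distrib, ← Finset.sum_mul,
            L1 X hX, ← Finset.mul_sum, ← Finset.sum_mul, L3 X hX]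
      _ = -(∑ i, ∑ j, (((d : ℝ) - 2 + ((Xᵀ * X) i j) ^ 2)) * Smat W X d1 i j)
            + (1/2) * (∑ i, ∑ j, ((2 + 2 * (Xᵀ * X) i j) * (1 - (Xᵀ * X) i j) ^ 2)
                * (W i j * Real.exp (β * (Xᵀ * X) i j) * β)) := (hcomb _ _).symm
      _ = ∑ i, ∑ j, W i j * Real.exp (β * (Xᵀ * X) i j)
          * ((1 - (Xᵀ * X) i j) * (((d : ℝ) - 2 - (Xᵀ * X) i j)
              + β * ((1 - (Xᵀ * X) i j) * (1 + (Xᵀ * X) i j)))) := by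
          rw [L4 X W hWsymm hX d1, hcomb]
          refine Finset.sum_congr rfl fun i _ => Finset.sum_congr rfl fun j _ => ?_
          simp only [hd1def]
          ring
  -- the summed Hessian inequality
  have hineq : ∑ i, ∑ j, W i j * Real.exp (β * (Xᵀ * X) i j)
      * ((1 - (Xᵀ * X) i j) * (((d : ℝ) - 2 - (Xᵀ * X) i j)
          + β * ((1 - (Xᵀ * X) i j) * (1 + (Xᵀ * X) i j)))) ≤ 0 := by
    rw [← hEq]
    exact Finset.sum_nonpos fun k _ => hhess (Vk X k) (tangentVk X hX k)
  -- bounds on the correlations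
  have hbound : ∀ i j : Fin n, -1 ≤ (Xᵀ * X) i j ∧ (Xᵀ * X) i j ≤ 1 := by
    intro i j
    have hcs : ((Xᵀ * X) i j) ^ 2 ≤ 1 := by
      rw [hP]
      have := Finset.sum_mul_sq_le_sq_mul_sq Finset.univ (fun a => X a i) (fun a => X a j)
      simpa [hX i, hX j] using this
    constructor <;> nlinarith [hcs]
  have hd3 : (3 : ℝ) ≤ (d : ℝ) := by exact_mod_cast hd
  have hterm : ∀ i j : Fin n, 0 ≤ W i j * Real.exp (β * (Xᵀ * X) i j)
      * ((1 - (Xᵀ * X) i j) * (((d : ℝ) - 2 - (Xᵀ * X) i j)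
          + β * ((1 - (Xᵀ * X) i j) * (1 + (Xᵀ * X) i j)))) := by
    intro i j
    obtain ⟨hlo, hhi⟩ := hbound i j
    refine mul_nonneg (mul_nonneg (hWnonneg i j) (Real.exp_pos _).le) ?_
    have h1 : (0:ℝ) ≤ 1 - (Xᵀ * X) i j := by linarith
    have h2 : (0:ℝ) ≤ (d : ℝ) - 2 - (Xᵀ * X) i j := by linarith
    have h3 : (0:ℝ) ≤ β * ((1 - (Xᵀ * X) i j) * (1 + (Xᵀ * X) i j)) :=
      mul_nonneg hβ.le (mul_nonneg h1 (by linarith))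
    exact mul_nonneg h1 (by linarith)
  have hTz : ∑ i, ∑ j, W i j * Real.exp (β * (Xᵀ * X) i j)
      * ((1 - (Xᵀ * X) i j) * (((d : ℝ) - 2 - (Xᵀ * X) i j)
          + β * ((1 - (Xᵀ * X) i j) * (1 + (Xᵀ * X) i j)))) = 0 :=
    le_antisymm hineq (Finset.sum_nonneg fun i _ =>
      Finset.sum_nonneg fun j _ => hterm i j)
  have hzero : ∀ i j : Fin n, W i j * Real.exp (β * (Xᵀ * X) i j)
      * ((1 - (Xᵀ * X) i j) * (((d : ℝ) - 2 - (Xᵀ * X) i j)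
          + β * ((1 - (Xᵀ * X) i j) * (1 + (Xᵀ * X) i j)))) = 0 := by
    intro i j
    have hrow := (Finset.sum_eq_zero_iff_of_nonneg
      (fun i _ => Finset.sum_nonneg fun j _ => hterm i j)).mp hTz i (Finset.mem_univ i)
    exact (Finset.sum_eq_zero_iff_of_nonneg
      (fun j _ => hterm i j)).mp hrow j (Finset.mem_univ j)
  -- edges force equal correlation 1
  have hedge : ∀ i j : Fin n, 0 < W i j → (Xᵀ * X) i j = 1 := by
    intro i j hw
    by_contra hne
    obtain ⟨hlo, hhi⟩ := hbound i j
    have hlt : (Xᵀ * X) i j < 1 := lt_of_le_of_ne hhi hne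
    have h0 := hzero i j
    have hQ : (1 - (Xᵀ * X) i j) * (((d : ℝ) - 2 - (Xᵀ * X) i j)
        + β * ((1 - (Xᵀ * X) i j) * (1 + (Xᵀ * X) i j))) = 0 := by
      rcases mul_eq_zero.mp h0 with h | h
      · exact absurd h (mul_pos hw (Real.exp_pos _)).ne'
      · exact h
    nlinarith [mul_pos (by linarith : (0:ℝ) < 1 - (Xᵀ * X) i j)
        (by linarith : (0:ℝ) < (d : ℝ) - 2 - (Xᵀ * X) i j),
      mul_nonneg (mul_nonneg (by linarith : (0:ℝ) ≤ 1 - (Xᵀ * X) i j) hβ.le)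
        (mul_nonneg (by linarith : (0:ℝ) ≤ 1 - (Xᵀ * X) i j)
          (by linarith : (0:ℝ) ≤ 1 + (Xᵀ * X) i j))]
  -- edges force equal columns
  have hcols : ∀ i j : Fin n, 0 < W i j → ∀ a, X a i = X a j := by
    intro i j hw
    have hp1 : ∑ b, X b i * X b j = 1 := by rw [← hP]; exact hedge i j hw
    have hsq : ∑ b, (X b i - X b j) ^ 2 = 0 := by
      have e : ∀ b : Fin d, (X b i - X b j) ^ 2
          = X b i ^ 2 + X b j ^ 2 - 2 * (X b i * X b j) := fun b => by ring
      simp only [e]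
      rw [Finset.sum_sub_distrib, Finset.sum_add_distrib, hX i, hX j,
        ← Finset.mul_sum, hp1]
      ring
    intro a
    have ha := (Finset.sum_eq_zero_iff_of_nonneg
      (fun b _ => sq_nonneg (X b i - X b j))).mp hsq a (Finset.mem_univ a)
    have := pow_eq_zero_iff (n := 2) (by norm_num) |>.mp ha
    linarith [this]
  -- propagate along the connected graph
  have hc : (SimpleGraph.fromRel fun i j => 0 < W i j).Connected := hconn
  intro j j'
  obtain ⟨w⟩ := hc.preconnected j j'
  induction w with
  | nil => intro i; rfl
  | cons hadj q ih =>
    intro i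
    rename_i u v x
    rw [SimpleGraph.fromRel_adj] at hadj
    have huv : X i u = X i v := by
      rcases hadj.2 with h | h
      · exact hcols u v h i
      · exact (hcols v u h i).symm
    rw [huv]
    exact ih i
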